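/- Let N ≥ 1, n ≥ 1, let U ⊆ ℂⁿ be an open set of points (a_1,…,a_n) with pairwise distinct coordinates, and let A_1,…,A_n : U → M_N(ℂ) be C¹ functions satisfying the Schlesinger system: ∂_{a_μ}A_ν = [A_μ,A_ν]/(a_μ−a_ν) for μ ≠ ν, and ∂_{a_ν}A_ν = −Σ_{μ≠ν} [A_μ,A_ν]/(a_μ−a_ν). Define f_μ = Σ_{ν≠μ} tr(A_μA_ν)/(a_μ−a_ν) for each μ. Then the 1-form Σ_μ f_μ da_μ is closed: for all μ, ρ, ∂_{a_ρ} f_μ = ∂_{a_μ} f_ρ on U. -/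

import Mathlib

open Finset Matrix

attribute [local instance] Matrix.normedAddCommGroup Matrix.normedSpace

noncomputable def schlesingerB (N : ℕ) :
    Matrix (Fin N) (Fin N) ℂ →L[ℂ] Matrix (Fin N) (Fin N) ℂ →L[ℂ] ℂ :=
  LinearMap.toContinuousLinearMap
  { toFun := fun X => LinearMap.toContinuousLinearMap
      ((Matrix.traceLinearMap (Fin N) ℂ ℂ) ∘ₗ (LinearMap.mulLeft ℂ X))
    map_add' := by intro X Y; ext Z; simp [add_mul]
    map_smul' := by intro c X; ext Z; simp [smul_mul_assoc] }

lemma schlesingerB_apply (N : ℕ) (X Y : Matrix (Fin N) (Fin N) ℂ) :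
    schlesingerB N X Y = (X * Y).trace := rfl

lemma schlesinger_trace_comm_self (N : ℕ) (X Y : Matrix (Fin N) (Fin N) ℂ) :
    ((X*Y - Y*X)*X).trace = 0 := by
  rw [Matrix.sub_mul, Matrix.trace_sub, Matrix.trace_mul_cycle Y X X, sub_self]

lemma schlesinger_tricomm (N : ℕ) (X Y Z : Matrix (Fin N) (Fin N) ℂ) (x y z : ℂ)
    (hxy : x ≠ y) (hxz : x ≠ z) (hyz : y ≠ z) :
    (y-z)⁻¹ * ((x-z)⁻¹ * (Y*(X*Z-Z*X)).trace + (x-y)⁻¹ * ((X*Y-Y*X)*Z).trace)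
      - (y-x)⁻¹ * ((z-x)⁻¹ * (Y*(Z*X-X*Z)).trace) = 0 := by
  have e1 : (Y*(X*Z-Z*X)).trace = (Y*X*Z).trace - (X*Y*Z).trace := by
    rw [Matrix.mul_sub, Matrix.trace_sub, ← mul_assoc, ← mul_assoc,
      Matrix.trace_mul_cycle Y Z X]
  have e2 : ((X*Y-Y*X)*Z).trace = (X*Y*Z).trace - (Y*X*Z).trace := by
    rw [Matrix.sub_mul, Matrix.trace_sub]
  have e3 : (Y*(Z*X-X*Z)).trace = (X*Y*Z).trace - (Y*X*Z).trace := by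
    rw [Matrix.mul_sub, Matrix.trace_sub, ← mul_assoc, ← mul_assoc,
      Matrix.trace_mul_cycle Y Z X]
  rw [e1, e2, e3]
  have h1 : x - y ≠ 0 := sub_ne_zero.2 hxy
  have h2 : x - z ≠ 0 := sub_ne_zero.2 hxz
  have h3 : y - z ≠ 0 := sub_ne_zero.2 hyz
  have h4 : y - x ≠ 0 := sub_ne_zero.2 hxy.symm
  have h5 : z - x ≠ 0 := sub_ne_zero.2 hxz.symm
  field_simp
  ring

/-- Key computation: for `μ ≠ ρ`, `∂_ρ f_μ = tr(A_μ A_ρ)/(a_μ - a_ρ)^2`. -/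
lemma schlesinger_key (N n : ℕ)
    (U : Set (Fin n → ℂ)) (hU : IsOpen U)
    (hdist : ∀ a ∈ U, ∀ μ ν : Fin n, μ ≠ ν → a μ ≠ a ν)
    (A : Fin n → (Fin n → ℂ) → Matrix (Fin N) (Fin N) ℂ)
    (hA : ∀ ν, ContDiffOn ℂ 1 (A ν) U)
    (hSch1 : ∀ a ∈ U, ∀ μ ν : Fin n, μ ≠ ν →
      fderiv ℂ (A ν) a (Pi.single μ 1) =
        (a μ - a ν)⁻¹ • (A μ a * A ν a - A ν a * A μ a))
    (hSch2 : ∀ a ∈ U, ∀ ν : Fin n,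
      fderiv ℂ (A ν) a (Pi.single ν 1) =
        -∑ μ ∈ univ.erase ν, (a μ - a ν)⁻¹ • (A μ a * A ν a - A ν a * A μ a))
    (f : Fin n → (Fin n → ℂ) → ℂ)
    (hf : ∀ μ, ∀ b, f μ b = ∑ ν ∈ univ.erase μ, (A μ b * A ν b).trace / (b μ - b ν))
    (a : Fin n → ℂ) (ha : a ∈ U) (μ ρ : Fin n) (hμρ : μ ≠ ρ) :
    fderiv ℂ (f μ) a (Pi.single ρ 1) =
      (A μ a * A ρ a).trace / (a μ - a ρ)^2 := by
  classical
  -- differentiability of each A ν at a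
  have hDA : ∀ ν, HasFDerivAt (A ν) (fderiv ℂ (A ν) a) a := fun ν =>
    (((hA ν).differentiableOn one_ne_zero).differentiableAt (hU.mem_nhds ha)).hasFDerivAt
  -- the derivative of each term
  set D : Fin n → ((Fin n → ℂ) →L[ℂ] ℂ) := fun ν =>
    (A μ a * A ν a).trace •
      (((1 : ℂ →L[ℂ] ℂ).smulRight (-((a μ - a ν)^2)⁻¹)).comp
        ((ContinuousLinearMap.proj μ : (Fin n → ℂ) →L[ℂ] ℂ) - ContinuousLinearMap.proj ν))
    + (a μ - a ν)⁻¹ •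
      (((schlesingerB N).isBoundedBilinearMap.deriv (A μ a, A ν a)).comp
        ((fderiv ℂ (A μ) a).prod (fderiv ℂ (A ν) a))) with hD
  have hterm : ∀ ν ∈ univ.erase μ,
      HasFDerivAt (fun b => (A μ b * A ν b).trace / (b μ - b ν)) (D ν) a := by
    intro ν hν
    have hνμ : ν ≠ μ := (Finset.mem_erase.1 hν).1
    have hd : a μ - a ν ≠ 0 := sub_ne_zero.2 (hdist a ha μ ν hνμ.symm)
    have hnum : HasFDerivAt (fun b => (A μ b * A ν b).trace)
        (((schlesingerB N).isBoundedBilinearMap.deriv (A μ a, A ν a)).comp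
          ((fderiv ℂ (A μ) a).prod (fderiv ℂ (A ν) a))) a :=
      by
        have h1 := (schlesingerB N).isBoundedBilinearMap.hasFDerivAt (A μ a, A ν a)
        have h2 := HasFDerivAt.prodMk (hDA μ) (hDA ν)
        exact h1.comp a h2
    have hden : HasFDerivAt (fun b : Fin n → ℂ => b μ - b ν)
        ((ContinuousLinearMap.proj μ : (Fin n → ℂ) →L[ℂ] ℂ) - ContinuousLinearMap.proj ν) a :=
      ((ContinuousLinearMap.proj μ : (Fin n → ℂ) →L[ℂ] ℂ).hasFDerivAt (x := a)).sub
        ((ContinuousLinearMap.proj ν : (Fin n → ℂ) →L[ℂ] ℂ).hasFDerivAt (x := a))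
    have hinv : HasFDerivAt (fun b : Fin n → ℂ => (b μ - b ν)⁻¹)
        (((1 : ℂ →L[ℂ] ℂ).smulRight (-((a μ - a ν)^2)⁻¹)).comp
          ((ContinuousLinearMap.proj μ : (Fin n → ℂ) →L[ℂ] ℂ) - ContinuousLinearMap.proj ν)) a :=
      (hasFDerivAt_inv hd).comp a hden
    have := hnum.mul hinv
    simp only [div_eq_mul_inv]
    exact this
  have hF : HasFDerivAt (f μ) (∑ ν ∈ univ.erase μ, D ν) a := by
    have hfμ : f μ = fun b => ∑ ν ∈ univ.erase μ, (A μ b * A ν b).trace / (b μ - b ν) :=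
      funext (hf μ)
    rw [hfμ]
    exact HasFDerivAt.fun_sum hterm
  rw [hF.fderiv, ContinuousLinearMap.sum_apply]
  -- evaluate each term at Pi.single ρ 1
  have hval : ∀ ν, ν ≠ μ → D ν (Pi.single ρ 1) =
      (A μ a * A ν a).trace * (((Pi.single ρ 1 : Fin n → ℂ) μ - (Pi.single ρ 1 : Fin n → ℂ) ν)
        * (-((a μ - a ν)^2)⁻¹))
      + (a μ - a ν)⁻¹ * ((A μ a * (fderiv ℂ (A ν) a (Pi.single ρ 1))).trace
        + ((fderiv ℂ (A μ) a (Pi.single ρ 1)) * A ν a).trace) := by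
    intro ν hν
    rw [hD]
    simp only [ContinuousLinearMap.add_apply, ContinuousLinearMap.smul_apply,
      ContinuousLinearMap.comp_apply, ContinuousLinearMap.sub_apply,
      ContinuousLinearMap.proj_apply, ContinuousLinearMap.smulRight_apply,
      ContinuousLinearMap.one_apply, ContinuousLinearMap.prod_apply, smul_eq_mul]
    rfl
  have hρμ : ρ ≠ μ := hμρ.symm
  have hd : a μ - a ρ ≠ 0 := sub_ne_zero.2 (hdist a ha μ ρ hμρ)
  have hsμ : (Pi.single ρ 1 : Fin n → ℂ) μ = 0 := Pi.single_eq_of_ne hμρ 1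
  have hsρ : (Pi.single ρ 1 : Fin n → ℂ) ρ = 1 := Pi.single_eq_same ρ 1
  have hρmem : ρ ∈ univ.erase μ := Finset.mem_erase.2 ⟨hρμ, Finset.mem_univ ρ⟩
  have hμmem : μ ∈ univ.erase ρ := Finset.mem_erase.2 ⟨hμρ, Finset.mem_univ μ⟩
  -- value of the ρ-term
  have hDρ : D ρ (Pi.single ρ 1) = (A μ a * A ρ a).trace / (a μ - a ρ)^2
      - ∑ ν ∈ (univ.erase μ).erase ρ, (a μ - a ρ)⁻¹ *
          ((a ν - a ρ)⁻¹ * (A μ a * (A ν a * A ρ a - A ρ a * A ν a)).trace) := by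
    rw [hval ρ hρμ, hsμ, hsρ, hSch2 a ha ρ, hSch1 a ha ρ μ hρμ]
    rw [Matrix.mul_neg, Matrix.trace_neg, Matrix.mul_sum, Matrix.trace_sum]
    have hz1 : ((a ρ - a μ)⁻¹ • (A ρ a * A μ a - A μ a * A ρ a) * A ρ a).trace = 0 := by
      rw [Matrix.smul_mul, Matrix.trace_smul, schlesinger_trace_comm_self, smul_zero]
    rw [hz1]
    have hsplit : ∑ x ∈ univ.erase ρ,
        (A μ a * ((a x - a ρ)⁻¹ • (A x a * A ρ a - A ρ a * A x a))).trace
        = (A μ a * ((a μ - a ρ)⁻¹ • (A μ a * A ρ a - A ρ a * A μ a))).trace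
          + ∑ x ∈ (univ.erase ρ).erase μ,
            (A μ a * ((a x - a ρ)⁻¹ • (A x a * A ρ a - A ρ a * A x a))).trace :=
      (Finset.add_sum_erase _ _ hμmem).symm
    rw [hsplit]
    have hz2 : (A μ a * ((a μ - a ρ)⁻¹ • (A μ a * A ρ a - A ρ a * A μ a))).trace = 0 := by
      rw [Matrix.mul_smul, Matrix.trace_smul, Matrix.trace_mul_comm,
        schlesinger_trace_comm_self, smul_zero]
    rw [hz2, zero_add, Finset.erase_right_comm]
    have hsummand : ∀ x ∈ (univ.erase μ).erase ρ,
        (A μ a * ((a x - a ρ)⁻¹ • (A x a * A ρ a - A ρ a * A x a))).trace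
        = (a x - a ρ)⁻¹ * (A μ a * (A x a * A ρ a - A ρ a * A x a)).trace := by
      intro x hx
      rw [Matrix.mul_smul, Matrix.trace_smul, smul_eq_mul]
    rw [Finset.sum_congr rfl hsummand, add_zero, ← Finset.mul_sum, div_eq_mul_inv]
    ring
  -- value of the other terms
  have hSν : ∀ ν ∈ (univ.erase μ).erase ρ, D ν (Pi.single ρ 1) =
      (a μ - a ν)⁻¹ * ((a ρ - a ν)⁻¹ * (A μ a * (A ρ a * A ν a - A ν a * A ρ a)).trace
        + (a ρ - a μ)⁻¹ * ((A ρ a * A μ a - A μ a * A ρ a) * A ν a).trace) := by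
    intro ν hν
    have hνρ : ν ≠ ρ := (Finset.mem_erase.1 hν).1
    have hνμ : ν ≠ μ := (Finset.mem_erase.1 (Finset.mem_erase.1 hν).2).1
    have hsν : (Pi.single ρ 1 : Fin n → ℂ) ν = 0 := Pi.single_eq_of_ne hνρ 1
    rw [hval ν hνμ, hsμ, hsν, hSch1 a ha ρ ν hνρ.symm, hSch1 a ha ρ μ hρμ]
    rw [Matrix.mul_smul, Matrix.smul_mul, Matrix.trace_smul, Matrix.trace_smul]
    simp only [smul_eq_mul]
    ring
  rw [← Finset.add_sum_erase _ _ hρmem, hDρ, Finset.sum_congr rfl hSν]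
  have heq : ∀ ν ∈ (univ.erase μ).erase ρ,
      (a μ - a ν)⁻¹ * ((a ρ - a ν)⁻¹ * (A μ a * (A ρ a * A ν a - A ν a * A ρ a)).trace
        + (a ρ - a μ)⁻¹ * ((A ρ a * A μ a - A μ a * A ρ a) * A ν a).trace)
      = (a μ - a ρ)⁻¹ * ((a ν - a ρ)⁻¹ * (A μ a * (A ν a * A ρ a - A ρ a * A ν a)).trace) := by
    intro ν hν
    have hνρ : ν ≠ ρ := (Finset.mem_erase.1 hν).1
    have hνμ : ν ≠ μ := (Finset.mem_erase.1 (Finset.mem_erase.1 hν).2).1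
    have hxy : a ρ ≠ a μ := hdist a ha ρ μ hρμ
    have hxz : a ρ ≠ a ν := hdist a ha ρ ν hνρ.symm
    have hyz : a μ ≠ a ν := hdist a ha μ ν hνμ.symm
    exact sub_eq_zero.1
      (schlesinger_tricomm N (A ρ a) (A μ a) (A ν a) (a ρ) (a μ) (a ν) hxy hxz hyz)
  rw [Finset.sum_congr rfl heq, sub_add_cancel]

/-- along solutions of the Schlesinger system the 1-form
`∑_μ f_μ da_μ`, with `f_μ = ∑_{ν≠μ} tr(A_μA_ν)/(a_μ−a_ν)`, is closed:
`∂_{a_ρ} f_μ = ∂_{a_μ} f_ρ`.  Partial derivatives are directional derivatives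
`fderiv ℂ F a (Pi.single μ 1)` on the open set `U ⊆ ℂⁿ` of configurations with
pairwise distinct coordinates. -/
theorem schlesinger_tau_form_closed (N n : ℕ) (hN : 1 ≤ N) (hn : 1 ≤ n)
    (U : Set (Fin n → ℂ)) (hU : IsOpen U)
    (hdist : ∀ a ∈ U, ∀ μ ν : Fin n, μ ≠ ν → a μ ≠ a ν)
    (A : Fin n → (Fin n → ℂ) → Matrix (Fin N) (Fin N) ℂ)
    (hA : ∀ ν, ContDiffOn ℂ 1 (A ν) U)
    (hSch1 : ∀ a ∈ U, ∀ μ ν : Fin n, μ ≠ ν →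
      fderiv ℂ (A ν) a (Pi.single μ 1) =
        (a μ - a ν)⁻¹ • (A μ a * A ν a - A ν a * A μ a))
    (hSch2 : ∀ a ∈ U, ∀ ν : Fin n,
      fderiv ℂ (A ν) a (Pi.single ν 1) =
        -∑ μ ∈ univ.erase ν, (a μ - a ν)⁻¹ • (A μ a * A ν a - A ν a * A μ a))
    (f : Fin n → (Fin n → ℂ) → ℂ)
    (hf : ∀ μ, ∀ b, f μ b = ∑ ν ∈ univ.erase μ, (A μ b * A ν b).trace / (b μ - b ν)) :
    ∀ a ∈ U, ∀ μ ρ : Fin n,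
      fderiv ℂ (f μ) a (Pi.single ρ 1) = fderiv ℂ (f ρ) a (Pi.single μ 1) := by
  intro a ha μ ρ
  by_cases h : μ = ρ
  · subst h; rfl
  · rw [schlesinger_key N n U hU hdist A hA hSch1 hSch2 f hf a ha μ ρ h,
      schlesinger_key N n U hU hdist A hA hSch1 hSch2 f hf a ha ρ μ (Ne.symm h),
      Matrix.trace_mul_comm, show (a ρ - a μ)^2 = (a μ - a ρ)^2 by ring]
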